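/- Let n ≥ 1 and let λ_1 ≥ λ_2 ≥ ... ≥ λ_n be real numbers with Σ_{i=1}^n λ_i² = 1. Define I₁ = {j : λ_1 − λ_j > 1} and I = {(i,j) : 1 ≤ i ≤ j ≤ n, λ_i − λ_j > 1}, and suppose I = {1} × I₁ with n₀ := |I| ≥ 1. Then Σ_{(i,j)∈I} [(λ_i − λ_j)² − 1] = 1 if and only if 1 ≤ n₀ < n, λ_1 = √(n₀/(n₀+1)), λ_{n−n₀+1} = ... = λ_n = −1/√(n₀² + n₀), and λ_k = 0 for all other indices k. -/

import Mathlib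

open BigOperators

set_option maxHeartbeats 1600000 in
/-- Lemma 2.2 (equality part): suppose `λ₁ ≥ … ≥ λ_n`, `∑ λᵢ² = 1`, and the set
`I = {(i,j) : i ≤ j, λᵢ − λⱼ > 1}` has the form `{1} × I₁` with `n₀ = |I| ≥ 1`
(indices 0-based). Then `∑_{(i,j)∈I} [(λᵢ − λⱼ)² − 1] = 1` holds if and only if
`n₀ < n`, `λ₁ = √(n₀/(n₀+1))`, the last `n₀` values equal `−1/√(n₀²+n₀)` and all
the other values vanish. -/
theorem gap_sum_eq_one_iff (n : ℕ) (hn : 1 ≤ n) (lam : Fin n → ℝ)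
    (hmono : Antitone lam) (hsum : ∑ i, (lam i) ^ 2 = 1)
    (I : Finset (Fin n × Fin n))
    (hI : I = Finset.univ.filter
      (fun p : Fin n × Fin n => p.1 ≤ p.2 ∧ lam p.1 - lam p.2 > 1))
    (hI1 : I = (Finset.univ.filter
        (fun j : Fin n => lam ⟨0, by omega⟩ - lam j > 1)).image
      (fun j => ((⟨0, by omega⟩ : Fin n), j)))
    (hn0 : 1 ≤ I.card) :
    ∑ p ∈ I, ((lam p.1 - lam p.2) ^ 2 - 1) = 1 ↔
      I.card < n ∧
      lam ⟨0, by omega⟩ = Real.sqrt ((I.card : ℝ) / ((I.card : ℝ) + 1)) ∧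
      (∀ k : Fin n, n - I.card ≤ k.1 →
        lam k = -1 / Real.sqrt ((I.card : ℝ) ^ 2 + (I.card : ℝ))) ∧
      (∀ k : Fin n, 1 ≤ k.1 → k.1 < n - I.card → lam k = 0) := by
  classical
  have hn' : 0 < n := hn
  set z : Fin n := ⟨0, hn'⟩ with hzdef
  set F : Finset (Fin n) := Finset.univ.filter (fun j => lam z - lam j > 1) with hFdef
  set a : ℝ := lam z with hadef
  set n₀ : ℕ := I.card with hn₀def
  have hinj : Function.Injective (fun j : Fin n => (z, j)) := by
    intro x y h
    exact congrArg Prod.snd h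
  have hI1' : I = F.image (fun j => (z, j)) := hI1
  have hcardF : F.card = n₀ := by
    rw [hn₀def, hI1', Finset.card_image_of_injective F hinj]
  have hzF : z ∉ F := by simp [hFdef]; linarith [hadef]
  have hn₀lt : n₀ < n := by
    have hsub : F ⊆ Finset.univ.erase z := by
      intro j hj
      exact Finset.mem_erase.mpr ⟨fun h => hzF (h ▸ hj), Finset.mem_univ j⟩
    have := Finset.card_le_card hsub
    rw [hcardF, Finset.card_erase_of_mem (Finset.mem_univ z), Finset.card_univ,
      Fintype.card_fin] at this
    omega
  have hup : ∀ ⦃j k : Fin n⦄, j ∈ F → j ≤ k → k ∈ F := by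
    intro j k hj hjk
    simp only [hFdef, Finset.mem_filter, Finset.mem_univ, true_and] at hj ⊢
    have := hmono hjk
    linarith
  have hmemF : ∀ j : Fin n, j ∈ F ↔ n - n₀ ≤ j.1 := by
    intro j
    constructor
    · intro hj
      by_contra hlt
      push_neg at hlt
      have hsub : Finset.Ici j ⊆ F := fun k hk => hup hj (Finset.mem_Ici.mp hk)
      have := Finset.card_le_card hsub
      rw [Fin.card_Ici, hcardF] at this
      omega
    · intro hj
      by_contra hnot
      have hsub : F ⊆ Finset.Ioi j := by
        intro k hk
        rw [Finset.mem_Ioi]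
        by_contra hle
        push_neg at hle
        exact hnot (hup hk hle)
      have := Finset.card_le_card hsub
      rw [Fin.card_Ioi, hcardF] at this
      omega
  set J : Finset (Fin n) :=
    Finset.univ.filter (fun k : Fin n => 1 ≤ k.1 ∧ k.1 < n - n₀) with hJdef
  have hmemJ : ∀ k : Fin n, k ∈ J ↔ 1 ≤ k.1 ∧ k.1 < n - n₀ := by
    intro k; simp [hJdef]
  have hpart : ∀ f : Fin n → ℝ,
      ∑ k, f k = f z + ((∑ k ∈ J, f k) + ∑ k ∈ F, f k) := by
    intro f
    rw [← Finset.sum_filter_add_sum_filter_not Finset.univ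
      (fun k : Fin n => n - n₀ ≤ k.1) f]
    have h1 : Finset.univ.filter (fun k : Fin n => n - n₀ ≤ k.1) = F := by
      ext k; simp [hmemF k]
    have h2 : Finset.univ.filter (fun k : Fin n => ¬ (n - n₀ ≤ k.1)) = insert z J := by
      ext k
      simp only [Finset.mem_filter, Finset.mem_univ, true_and, Finset.mem_insert,
        hmemJ k, Fin.ext_iff, hzdef]
      omega
    have hzJ : z ∉ J := by simp [hmemJ, hzdef]
    rw [h1, h2, Finset.sum_insert hzJ]
    ring
  have hsum' : a ^ 2 + ((∑ k ∈ J, (lam k) ^ 2) + ∑ j ∈ F, (lam j) ^ 2) = 1 :=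
    (hpart (fun k => (lam k) ^ 2)).symm.trans hsum
  have hS : ∑ p ∈ I, ((lam p.1 - lam p.2) ^ 2 - 1)
      = ∑ j ∈ F, ((a - lam j) ^ 2 - 1) := by
    rw [hI1', Finset.sum_image (fun x _ y _ h => hinj h)]
  have e1 : ∀ j ∈ F, ((a - lam j) ^ 2 - 1)
      = (a ^ 2 - 1) + ((-2 * a) * lam j + (lam j) ^ 2) := fun j _ => by ring
  have expand1 : ∑ j ∈ F, ((a - lam j) ^ 2 - 1)
      = (n₀ : ℝ) * a ^ 2 - 2 * a * (∑ j ∈ F, lam j) + (∑ j ∈ F, (lam j) ^ 2) - n₀ := by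
    rw [Finset.sum_congr rfl e1, Finset.sum_add_distrib, Finset.sum_add_distrib,
      Finset.sum_const, ← Finset.mul_sum, hcardF, nsmul_eq_mul]
    ring
  have e2 : ∀ j ∈ F, (a + (n₀ : ℝ) * lam j) ^ 2
      = a ^ 2 + ((2 * (n₀ : ℝ) * a) * lam j + (n₀ : ℝ) ^ 2 * (lam j) ^ 2) :=
    fun j _ => by ring
  have expand2 : ∑ j ∈ F, (a + (n₀ : ℝ) * lam j) ^ 2
      = (n₀ : ℝ) * a ^ 2 + 2 * n₀ * a * (∑ j ∈ F, lam j)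
        + (n₀ : ℝ) ^ 2 * (∑ j ∈ F, (lam j) ^ 2) := by
    rw [Finset.sum_congr rfl e2, Finset.sum_add_distrib, Finset.sum_add_distrib,
      Finset.sum_const, ← Finset.mul_sum, ← Finset.mul_sum, hcardF, nsmul_eq_mul]
    ring
  have key : (n₀ : ℝ) * (1 - ∑ j ∈ F, ((a - lam j) ^ 2 - 1))
      = (∑ j ∈ F, (a + (n₀ : ℝ) * lam j) ^ 2)
        + (n₀ : ℝ) * ((n₀ : ℝ) + 1) * (∑ k ∈ J, (lam k) ^ 2) := by
    rw [expand1, expand2]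
    linear_combination (-(n₀ : ℝ) * ((n₀ : ℝ) + 1)) * hsum'
  have hn₀R : (1 : ℝ) ≤ (n₀ : ℝ) := by exact_mod_cast hn0
  have hn₀ne : (n₀ : ℝ) ≠ 0 := by linarith
  have hTnonneg : 0 ≤ ∑ j ∈ F, (a + (n₀ : ℝ) * lam j) ^ 2 :=
    Finset.sum_nonneg fun j _ => sq_nonneg _
  have hQnonneg : 0 ≤ ∑ k ∈ J, (lam k) ^ 2 :=
    Finset.sum_nonneg fun k _ => sq_nonneg _
  rw [hS]
  constructor
  · intro hSone
    have hzero : (∑ j ∈ F, (a + (n₀ : ℝ) * lam j) ^ 2)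
        + (n₀ : ℝ) * ((n₀ : ℝ) + 1) * (∑ k ∈ J, (lam k) ^ 2) = 0 := by
      rw [← key, hSone]; ring
    have hcpos : (0 : ℝ) < (n₀ : ℝ) * ((n₀ : ℝ) + 1) := by nlinarith
    have hcQ : 0 ≤ (n₀ : ℝ) * ((n₀ : ℝ) + 1) * (∑ k ∈ J, (lam k) ^ 2) :=
      mul_nonneg hcpos.le hQnonneg
    have hT0 : ∑ j ∈ F, (a + (n₀ : ℝ) * lam j) ^ 2 = 0 := by linarith
    have hQ0 : ∑ k ∈ J, (lam k) ^ 2 = 0 := by nlinarith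
    have hFv : ∀ j ∈ F, (n₀ : ℝ) * lam j = -a := by
      intro j hj
      have h := (Finset.sum_eq_zero_iff_of_nonneg (fun i _ => sq_nonneg _)).mp hT0 j hj
      have h' := sq_eq_zero_iff.mp h
      linarith
    have hJv : ∀ k ∈ J, lam k = 0 := by
      intro k hk
      have h := (Finset.sum_eq_zero_iff_of_nonneg (fun i _ => sq_nonneg _)).mp hQ0 k hk
      exact sq_eq_zero_iff.mp h
    have hs2 : (n₀ : ℝ) ^ 2 * (∑ j ∈ F, (lam j) ^ 2) = (n₀ : ℝ) * a ^ 2 := by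
      rw [Finset.mul_sum]
      rw [Finset.sum_congr rfl (fun j hj => by
        have h := hFv j hj
        linear_combination ((n₀ : ℝ) * lam j - a) * h : ∀ j ∈ F, (n₀ : ℝ) ^ 2 * (lam j) ^ 2 = a ^ 2)]
      rw [Finset.sum_const, hcardF, nsmul_eq_mul]
    have hsum'' : a ^ 2 + ∑ j ∈ F, (lam j) ^ 2 = 1 := by
      rw [hQ0] at hsum'; linarith
    have ha2 : a ^ 2 * ((n₀ : ℝ) + 1) = n₀ := by
      have h' : a ^ 2 * ((n₀ : ℝ) + 1) * n₀ = (n₀ : ℝ) * n₀ := by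
        linear_combination (n₀ : ℝ) ^ 2 * hsum'' - hs2
      exact mul_right_cancel₀ hn₀ne h'
    have hFne : F.Nonempty := Finset.card_pos.mp (by omega)
    obtain ⟨j0, hj0⟩ := hFne
    have hapos : 0 < a := by
      have h1 : lam z - lam j0 > 1 := by
        have h := hj0
        rw [hFdef, Finset.mem_filter] at h
        exact h.2
      have h2 := hFv j0 hj0
      have h3 := mul_lt_mul_of_pos_left h1 (show (0 : ℝ) < (n₀ : ℝ) by linarith)
      nlinarith [h3, h2, hn₀R]
    have haval : a = Real.sqrt ((n₀ : ℝ) / ((n₀ : ℝ) + 1)) := by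
      rw [show (n₀ : ℝ) / ((n₀ : ℝ) + 1) = a ^ 2 by
        rw [div_eq_iff (by linarith : (n₀ : ℝ) + 1 ≠ 0)]; linarith [ha2]]
      exact (Real.sqrt_sq hapos.le).symm
    have hsq : Real.sqrt ((n₀ : ℝ) ^ 2 + (n₀ : ℝ)) = (n₀ : ℝ) / a := by
      rw [show (n₀ : ℝ) ^ 2 + (n₀ : ℝ) = ((n₀ : ℝ) / a) ^ 2 by
        rw [div_pow, eq_div_iff (pow_ne_zero 2 (ne_of_gt hapos))]
        linear_combination (n₀ : ℝ) * ha2]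
      exact Real.sqrt_sq (div_nonneg (by linarith) hapos.le)
    refine ⟨hn₀lt, haval, ?_, ?_⟩
    · intro k hk
      have hkF : k ∈ F := (hmemF k).mpr hk
      have hsqpos : (0 : ℝ) < Real.sqrt ((n₀ : ℝ) ^ 2 + (n₀ : ℝ)) := by
        rw [hsq]; exact div_pos (by linarith : (0:ℝ) < (n₀ : ℝ)) hapos
      rw [eq_div_iff (ne_of_gt hsqpos), hsq, ← mul_div_assoc,
        (by linarith [hFv k hkF] : lam k * (n₀ : ℝ) = -a), neg_div,
        div_self (ne_of_gt hapos)]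
    · intro k hk1 hk2
      exact hJv k ((hmemJ k).mpr ⟨hk1, hk2⟩)
  · rintro ⟨-, hA, hlast, hmid⟩
    have hA' : a = Real.sqrt ((n₀ : ℝ) / ((n₀ : ℝ) + 1)) := hA
    have hpos : (0 : ℝ) < (n₀ : ℝ) ^ 2 + (n₀ : ℝ) := by nlinarith
    have hsp : 0 < Real.sqrt ((n₀ : ℝ) ^ 2 + (n₀ : ℝ)) := Real.sqrt_pos.mpr hpos
    have hs1 : Real.sqrt ((n₀ : ℝ) ^ 2 + (n₀ : ℝ))
        * Real.sqrt ((n₀ : ℝ) / ((n₀ : ℝ) + 1)) = n₀ := by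
      rw [← Real.sqrt_mul hpos.le,
        show ((n₀ : ℝ) ^ 2 + (n₀ : ℝ)) * ((n₀ : ℝ) / ((n₀ : ℝ) + 1)) = (n₀ : ℝ) ^ 2 by
          rw [mul_div_assoc']
          rw [div_eq_iff (by linarith : (n₀ : ℝ) + 1 ≠ 0)]
          ring]
      exact Real.sqrt_sq (Nat.cast_nonneg _)
    have hbase : Real.sqrt ((n₀ : ℝ) / ((n₀ : ℝ) + 1))
        + (n₀ : ℝ) * (-1 / Real.sqrt ((n₀ : ℝ) ^ 2 + (n₀ : ℝ))) = 0 := by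
      have hmul : (Real.sqrt ((n₀ : ℝ) / ((n₀ : ℝ) + 1))
          + (n₀ : ℝ) * (-1 / Real.sqrt ((n₀ : ℝ) ^ 2 + (n₀ : ℝ))))
          * Real.sqrt ((n₀ : ℝ) ^ 2 + (n₀ : ℝ)) = 0 := by
        have e : (Real.sqrt ((n₀ : ℝ) / ((n₀ : ℝ) + 1))
            + (n₀ : ℝ) * (-1 / Real.sqrt ((n₀ : ℝ) ^ 2 + (n₀ : ℝ))))
            * Real.sqrt ((n₀ : ℝ) ^ 2 + (n₀ : ℝ))
            = Real.sqrt ((n₀ : ℝ) ^ 2 + (n₀ : ℝ)) * Real.sqrt ((n₀ : ℝ) / ((n₀ : ℝ) + 1))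
              + (n₀ : ℝ) * ((-1 / Real.sqrt ((n₀ : ℝ) ^ 2 + (n₀ : ℝ)))
                * Real.sqrt ((n₀ : ℝ) ^ 2 + (n₀ : ℝ))) := by ring
        rw [e, hs1, div_mul_cancel₀ _ (ne_of_gt hsp)]
        ring
      exact (mul_eq_zero.mp hmul).resolve_right (ne_of_gt hsp)
    have hQ0 : ∑ k ∈ J, (lam k) ^ 2 = 0 := by
      apply Finset.sum_eq_zero
      intro k hk
      obtain ⟨h1, h2⟩ := (hmemJ k).mp hk
      rw [hmid k h1 h2]
      norm_num
    have hT0 : ∑ j ∈ F, (a + (n₀ : ℝ) * lam j) ^ 2 = 0 := by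
      apply Finset.sum_eq_zero
      intro j hj
      rw [hlast j ((hmemF j).mp hj), hA', hbase]
      norm_num
    rw [hT0, hQ0] at key
    have h0 : (n₀ : ℝ) * (1 - ∑ j ∈ F, ((a - lam j) ^ 2 - 1)) = 0 := by
      rw [key]; ring
    rcases mul_eq_zero.mp h0 with h | h
    · exact absurd h hn₀ne
    · linarith
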